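/- arXiv:1812.09781 — 2 statements merged into one kernel-verified Lean document; each statement's English description precedes it below -/
import Mathlib

section
/- Let r₁, r₂ ≥ 2 be real numbers with r₁ > max{r₂, 2(r₂−1)}, let a > 0 and b > 0 be real constants, let c_f > 0 and c_g < 0 be real constants, let f : ℝ → ℝ be a function and let g : ℝ → ℝ be differentiable. Assume that f(s)·s/|s|^{r₁} converges to c_f and that g′(s)/|s|^{r₂−2} converges to (r₂−1)·c_g as |s| → ∞. Then the quotient (f(s)·s + a·g(s)·s − b·(g′(s)·s + g(s))²)/|s|^{r₁} converges to c_f as |s| → ∞; in particular, liminf_{|s|→∞} (f(s)·s + a·g(s)·s − b·(g′(s)·s + g(s))²)/|s|^{r₁} > 0. -/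
set_option maxHeartbeats 1000000


open Filter Topology

theorem balance_condition_dominant_bulk
    (r₁ r₂ : ℝ) (hr₁ : 2 ≤ r₁) (hr₂ : 2 ≤ r₂)
    (hdom : r₁ > max r₂ (2 * (r₂ - 1)))
    (a b : ℝ) (ha : 0 < a) (hb : 0 < b)
    (c_f c_g : ℝ) (hcf : 0 < c_f) (hcg : c_g < 0)
    (f g : ℝ → ℝ) (hg : Differentiable ℝ g)
    (hf_lim : Tendsto (fun s => f s * s / |s| ^ r₁) (cocompact ℝ) (𝓝 c_f))
    (hg_lim : Tendsto (fun s => deriv g s / |s| ^ (r₂ - 2)) (cocompact ℝ)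
      (𝓝 ((r₂ - 1) * c_g))) :
    Tendsto
      (fun s => (f s * s + a * g s * s - b * (deriv g s * s + g s) ^ 2) / |s| ^ r₁)
      (cocompact ℝ) (𝓝 c_f) ∧
    0 < Filter.liminf
      (fun s => (f s * s + a * g s * s - b * (deriv g s * s + g s) ^ 2) / |s| ^ r₁)
      (cocompact ℝ) := by
  have habs : Tendsto (fun s : ℝ => |s|) (cocompact ℝ) atTop := by
    exact tendsto_norm_cocompact_atTop (E := ℝ)
  -- bound on the derivative
  set C : ℝ := |(r₂ - 1) * c_g| + 1 with hCdef
  have hC0 : 0 < C := by positivity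
  have h1 : ∀ᶠ s in cocompact ℝ,
      dist (deriv g s / |s| ^ (r₂ - 2)) ((r₂ - 1) * c_g) < 1 :=
    hg_lim (Metric.ball_mem_nhds _ one_pos)
  have hEd2 : ∀ᶠ s : ℝ in cocompact ℝ,
      |deriv g s| ≤ C * |s| ^ (r₂ - 2) ∧ 1 ≤ |s| := by
    filter_upwards [h1, habs.eventually_ge_atTop 1] with s hs h1s
    refine ⟨?_, h1s⟩
    have hspos : (0 : ℝ) < |s| := by linarith
    have hpow : (0 : ℝ) < |s| ^ (r₂ - 2) := Real.rpow_pos_of_pos hspos _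
    have hub : |deriv g s / |s| ^ (r₂ - 2)| ≤ C := by
      have h2 : |deriv g s / |s| ^ (r₂ - 2)| =
          |(deriv g s / |s| ^ (r₂ - 2) - (r₂ - 1) * c_g) + (r₂ - 1) * c_g| := by
        ring_nf
      rw [h2]
      calc |(deriv g s / |s| ^ (r₂ - 2) - (r₂ - 1) * c_g) + (r₂ - 1) * c_g|
          ≤ |deriv g s / |s| ^ (r₂ - 2) - (r₂ - 1) * c_g| + |(r₂ - 1) * c_g| :=
            abs_add_le _ _
        _ ≤ C := by
            rw [hCdef]
            have := hs
            rw [Real.dist_eq] at this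
            linarith
    rw [abs_div, abs_of_pos hpow, div_le_iff₀ hpow] at hub
    exact hub
  rw [cocompact_eq_atBot_atTop, eventually_sup, eventually_atBot, eventually_atTop] at hEd2
  obtain ⟨⟨A, hA⟩, ⟨B, hB⟩⟩ := hEd2
  set R : ℝ := max 1 (max (-A) B) with hRdef
  have hR1 : (1 : ℝ) ≤ R := le_max_left _ _
  have hR0 : (0 : ℝ) < R := by linarith
  have hRbound : ∀ s : ℝ, R ≤ |s| → |deriv g s| ≤ C * |s| ^ (r₂ - 2) := by
    intro s hs
    rcases le_total 0 s with h | h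
    · rw [abs_of_nonneg h] at hs
      exact (hB s (le_trans (le_trans (le_max_right _ _) (le_max_right _ _)) hs)).1
    · rw [abs_of_nonpos h] at hs
      have hA' : -A ≤ -s := le_trans (le_trans (le_max_left _ _) (le_max_right _ _)) hs
      exact (hA s (by linarith)).1
  -- bound on g
  set D : ℝ := max |g R| |g (-R)| + C with hDdef
  have hD0 : 0 < D := by
    have : (0 : ℝ) ≤ max |g R| |g (-R)| := le_trans (abs_nonneg _) (le_max_left _ _)
    linarith
  have hgbound : ∀ s : ℝ, R ≤ |s| → |g s| ≤ D * |s| ^ (r₂ - 1) := by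
    intro s hs
    have hs1 : (1 : ℝ) ≤ |s| := le_trans hR1 hs
    have hspos : (0 : ℝ) < |s| := by linarith
    have hpow1 : (1 : ℝ) ≤ |s| ^ (r₂ - 1) := Real.one_le_rpow hs1 (by linarith)
    have hpow2 : |s| ^ (r₂ - 2) * |s| = |s| ^ (r₂ - 1) := by
      rw [show r₂ - 1 = (r₂ - 2) + 1 by ring, Real.rpow_add hspos, Real.rpow_one]
    have hpownn : (0 : ℝ) ≤ |s| ^ (r₂ - 2) := (Real.rpow_pos_of_pos hspos _).le
    have hmax : (0 : ℝ) ≤ max |g R| |g (-R)| :=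
      le_trans (abs_nonneg _) (le_max_left _ _)
    rcases le_total 0 s with h | h
    · have hsR : R ≤ s := by rwa [abs_of_nonneg h] at hs
      have key : |g s - g R| ≤ (C * |s| ^ (r₂ - 2)) * ‖s - R‖ := by
        refine Convex.norm_image_sub_le_of_norm_deriv_le (f := g) (s := Set.Icc R s)
          (fun x _ => hg x) (fun x hx => ?_) (convex_Icc R s)
          ⟨le_refl R, hsR⟩ ⟨hsR, le_refl s⟩
        have hx0 : (0 : ℝ) ≤ x := by linarith [hx.1]
        have hx1 : R ≤ |x| := by rw [abs_of_nonneg hx0]; exact hx.1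
        have hxs : |x| ≤ |s| := by
          rw [abs_of_nonneg hx0, abs_of_nonneg h]; exact hx.2
        calc ‖deriv g x‖ ≤ C * |x| ^ (r₂ - 2) := hRbound x hx1
          _ ≤ C * |s| ^ (r₂ - 2) :=
            mul_le_mul_of_nonneg_left
              (Real.rpow_le_rpow (abs_nonneg x) hxs (by linarith)) hC0.le
      have hsub : ‖s - R‖ ≤ |s| := by
        rw [Real.norm_eq_abs, abs_of_nonneg (by linarith : (0:ℝ) ≤ s - R),
          abs_of_nonneg h]
        linarith
      have h3 : |g s| ≤ |g R| + |g s - g R| := by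
        calc |g s| = |g R + (g s - g R)| := by ring_nf
          _ ≤ |g R| + |g s - g R| := abs_add_le _ _
      have h4 : (C * |s| ^ (r₂ - 2)) * ‖s - R‖ ≤ C * |s| ^ (r₂ - 1) := by
        calc (C * |s| ^ (r₂ - 2)) * ‖s - R‖ ≤ (C * |s| ^ (r₂ - 2)) * |s| :=
            mul_le_mul_of_nonneg_left hsub (mul_nonneg hC0.le hpownn)
          _ = C * |s| ^ (r₂ - 1) := by rw [mul_assoc, hpow2]
      have kb : |g s| ≤ |g R| + C * |s| ^ (r₂ - 1) := by linarith
      have hgR : |g R| ≤ max |g R| |g (-R)| := le_max_left _ _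
      have hmm : max |g R| |g (-R)| * 1 ≤ max |g R| |g (-R)| * |s| ^ (r₂ - 1) :=
        mul_le_mul_of_nonneg_left hpow1 hmax
      rw [hDdef]
      nlinarith
    · have hsR : s ≤ -R := by
        rw [abs_of_nonpos h] at hs; linarith
      have key : |g s - g (-R)| ≤ (C * |s| ^ (r₂ - 2)) * ‖s - (-R)‖ := by
        refine Convex.norm_image_sub_le_of_norm_deriv_le (f := g) (s := Set.Icc s (-R))
          (fun x _ => hg x) (fun x hx => ?_) (convex_Icc s (-R))
          ⟨hsR, le_refl _⟩ ⟨le_refl s, hsR⟩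
        have hxneg : x ≤ 0 := le_trans hx.2 (by linarith)
        have hx1 : R ≤ |x| := by
          rw [abs_of_nonpos hxneg]; linarith [hx.2]
        have hxs : |x| ≤ |s| := by
          rw [abs_of_nonpos hxneg, abs_of_nonpos h]; linarith [hx.1]
        calc ‖deriv g x‖ ≤ C * |x| ^ (r₂ - 2) := hRbound x hx1
          _ ≤ C * |s| ^ (r₂ - 2) :=
            mul_le_mul_of_nonneg_left
              (Real.rpow_le_rpow (abs_nonneg x) hxs (by linarith)) hC0.le
      have hsub : ‖s - (-R)‖ ≤ |s| := by
        rw [Real.norm_eq_abs, abs_of_nonpos (by linarith : s - (-R) ≤ 0),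
          abs_of_nonpos h]
        linarith
      have h3 : |g s| ≤ |g (-R)| + |g s - g (-R)| := by
        calc |g s| = |g (-R) + (g s - g (-R))| := by ring_nf
          _ ≤ |g (-R)| + |g s - g (-R)| := abs_add_le _ _
      have h4 : (C * |s| ^ (r₂ - 2)) * ‖s - (-R)‖ ≤ C * |s| ^ (r₂ - 1) := by
        calc (C * |s| ^ (r₂ - 2)) * ‖s - (-R)‖ ≤ (C * |s| ^ (r₂ - 2)) * |s| :=
            mul_le_mul_of_nonneg_left hsub (mul_nonneg hC0.le hpownn)
          _ = C * |s| ^ (r₂ - 1) := by rw [mul_assoc, hpow2]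
      have kb : |g s| ≤ |g (-R)| + C * |s| ^ (r₂ - 1) := by linarith
      have hgR : |g (-R)| ≤ max |g R| |g (-R)| := le_max_right _ _
      have hmm : max |g R| |g (-R)| * 1 ≤ max |g R| |g (-R)| * |s| ^ (r₂ - 1) :=
        mul_le_mul_of_nonneg_left hpow1 hmax
      rw [hDdef]
      nlinarith
  clear_value C R D
  clear hCdef hRdef hDdef
  -- power decay
  have hzero : ∀ p : ℝ, p < 0 → Tendsto (fun s : ℝ => |s| ^ p) (cocompact ℝ) (𝓝 0) := by
    intro p hp
    have := (tendsto_rpow_neg_atTop (show (0:ℝ) < -p by linarith)).comp habs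
    simpa [Function.comp_def] using this
  have hr₂r₁ : r₂ < r₁ := lt_of_le_of_lt (le_max_left _ _) hdom
  have h2r₂r₁ : 2 * (r₂ - 1) < r₁ := lt_of_le_of_lt (le_max_right _ _) hdom
  -- second term
  have h2 : Tendsto (fun s : ℝ => a * g s * s / |s| ^ r₁) (cocompact ℝ) (𝓝 0) := by
    have hbnd : Tendsto (fun s : ℝ => (a * D) * |s| ^ (r₂ - r₁)) (cocompact ℝ) (𝓝 0) := by
      have := (hzero (r₂ - r₁) (by linarith)).const_mul (a * D)
      simpa using this
    refine squeeze_zero_norm' ?_ hbnd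
    filter_upwards [habs.eventually_ge_atTop R] with s hs
    have hs1 : (1 : ℝ) ≤ |s| := le_trans hR1 hs
    have hspos : (0 : ℝ) < |s| := by linarith
    have hpowpos : (0 : ℝ) < |s| ^ r₁ := Real.rpow_pos_of_pos hspos _
    have heq : ‖a * g s * s / |s| ^ r₁‖ = a * |g s| * |s| / |s| ^ r₁ := by
      rw [Real.norm_eq_abs, abs_div, abs_mul, abs_mul, abs_of_pos ha,
        abs_of_pos hpowpos]
    rw [heq]
    have hnum : a * |g s| * |s| ≤ a * D * |s| ^ r₂ := by
      calc a * |g s| * |s| ≤ a * (D * |s| ^ (r₂ - 1)) * |s| := by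
            gcongr; exact hgbound s hs
        _ = a * D * (|s| ^ (r₂ - 1) * |s|) := by ring
        _ = a * D * |s| ^ r₂ := by
            have h5 := Real.rpow_add hspos (r₂ - 1) 1
            rw [Real.rpow_one] at h5
            rw [← h5]
            norm_num
    calc a * |g s| * |s| / |s| ^ r₁ ≤ a * D * |s| ^ r₂ / |s| ^ r₁ :=
          (div_le_div_iff_of_pos_right hpowpos).mpr hnum
      _ = a * D * |s| ^ (r₂ - r₁) := by
          rw [Real.rpow_sub hspos]; ring
  -- third term
  have h3 : Tendsto (fun s : ℝ => b * (deriv g s * s + g s) ^ 2 / |s| ^ r₁)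
      (cocompact ℝ) (𝓝 0) := by
    have hbnd : Tendsto (fun s : ℝ => (b * (C + D) ^ 2) * |s| ^ (2 * (r₂ - 1) - r₁))
        (cocompact ℝ) (𝓝 0) := by
      have := (hzero (2 * (r₂ - 1) - r₁) (by linarith)).const_mul (b * (C + D) ^ 2)
      simpa using this
    refine squeeze_zero_norm' ?_ hbnd
    filter_upwards [habs.eventually_ge_atTop R] with s hs
    have hs1 : (1 : ℝ) ≤ |s| := le_trans hR1 hs
    have hspos : (0 : ℝ) < |s| := by linarith
    have hpowpos : (0 : ℝ) < |s| ^ r₁ := Real.rpow_pos_of_pos hspos _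
    have heq : ‖b * (deriv g s * s + g s) ^ 2 / |s| ^ r₁‖ =
        b * (deriv g s * s + g s) ^ 2 / |s| ^ r₁ := by
      rw [Real.norm_eq_abs, abs_of_nonneg]
      positivity
    rw [heq]
    have hlin : |deriv g s * s + g s| ≤ (C + D) * |s| ^ (r₂ - 1) := by
      calc |deriv g s * s + g s| ≤ |deriv g s * s| + |g s| := abs_add_le _ _
        _ = |deriv g s| * |s| + |g s| := by rw [abs_mul]
        _ ≤ C * |s| ^ (r₂ - 2) * |s| + D * |s| ^ (r₂ - 1) := by
            gcongr
            · exact hRbound s hs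
            · exact hgbound s hs
        _ = (C + D) * |s| ^ (r₂ - 1) := by
            rw [mul_assoc, show r₂ - 1 = (r₂ - 2) + 1 by ring, Real.rpow_add hspos,
              Real.rpow_one]
            ring
    have hsq : (deriv g s * s + g s) ^ 2 ≤ (C + D) ^ 2 * |s| ^ (2 * (r₂ - 1)) := by
      have hneg : -((C + D) * |s| ^ (r₂ - 1)) ≤ deriv g s * s + g s := by
        have h6 := neg_abs_le (deriv g s * s + g s)
        linarith
      have := sq_le_sq' hneg (le_trans (le_abs_self _) hlin)
      calc (deriv g s * s + g s) ^ 2 ≤ ((C + D) * |s| ^ (r₂ - 1)) ^ 2 := this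
        _ = (C + D) ^ 2 * (|s| ^ (r₂ - 1) * |s| ^ (r₂ - 1)) := by ring
        _ = (C + D) ^ 2 * |s| ^ (2 * (r₂ - 1)) := by
            rw [two_mul, Real.rpow_add hspos]
    calc b * (deriv g s * s + g s) ^ 2 / |s| ^ r₁
        = b * ((deriv g s * s + g s) ^ 2 / |s| ^ r₁) := by ring
      _ ≤ b * ((C + D) ^ 2 * |s| ^ (2 * (r₂ - 1)) / |s| ^ r₁) :=
          mul_le_mul_of_nonneg_left
            ((div_le_div_iff_of_pos_right hpowpos).mpr hsq) hb.le
      _ = b * (C + D) ^ 2 * |s| ^ (2 * (r₂ - 1) - r₁) := by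
          rw [Real.rpow_sub hspos]; ring
  -- combine
  have hmain : Tendsto
      (fun s => (f s * s + a * g s * s - b * (deriv g s * s + g s) ^ 2) / |s| ^ r₁)
      (cocompact ℝ) (𝓝 c_f) := by
    have heq : (fun s : ℝ =>
        (f s * s + a * g s * s - b * (deriv g s * s + g s) ^ 2) / |s| ^ r₁) =
        fun s : ℝ => f s * s / |s| ^ r₁ + a * g s * s / |s| ^ r₁ -
          b * (deriv g s * s + g s) ^ 2 / |s| ^ r₁ := by
      funext s; ring
    rw [heq]
    simpa using (hf_lim.add h2).sub h3
  refine ⟨hmain, ?_⟩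
  haveI : (cocompact ℝ).NeBot := by
    rw [cocompact_eq_atBot_atTop]
    exact sup_neBot.mpr (Or.inl atBot_neBot)
  rw [hmain.liminf_eq]
  exact hcf
end

section
/- Let r₂ > 2 be a real number and set r₁ = 2(r₂−1) (so that r₁ > r₂), let a > 0 and b > 0 be real constants, let c_f and c_g be nonzero real constants, let f : ℝ → ℝ be a function and let g : ℝ → ℝ be differentiable. Assume that f(s)·s/|s|^{r₁} converges to c_f and that g′(s)/|s|^{r₂−2} converges to (r₂−1)·c_g as |s| → ∞. If c_f > b·r₂²·c_g², then the quotient (f(s)·s + a·g(s)·s − b·(g′(s)·s + g(s))²)/|s|^{r₁} converges to c_f − b·r₂²·c_g² as |s| → ∞; in particular, liminf_{|s|→∞} (f(s)·s + a·g(s)·s − b·(g′(s)·s + g(s))²)/|s|^{r₁} > 0. -/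
open Filter Topology
open Real

lemma aux_tendsto_atTop (r c : ℝ) (hr : 1 < r) (g : ℝ → ℝ) (hg : Differentiable ℝ g)
    (h : Tendsto (fun s => deriv g s / s ^ (r - 1)) atTop (𝓝 (r * c))) :
    Tendsto (fun s => g s / s ^ r) atTop (𝓝 c) := by
  have hr0 : 0 < r := by linarith
  rw [Metric.tendsto_nhds]
  intro ε hε
  have hε4 : 0 < ε / 4 * r := by positivity
  obtain ⟨T₀, hT₀⟩ := eventually_atTop.1 ((Metric.tendsto_nhds.1 h _ hε4))
  set T : ℝ := max T₀ 1 with hT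
  have hT1 : (1:ℝ) ≤ T := le_max_right _ _
  have hTpos : (0:ℝ) < T := by linarith
  have hcont : Continuous fun t : ℝ => t ^ r :=
    continuous_iff_continuousAt.2 fun x => Real.continuousAt_rpow_const x r (Or.inr hr0.le)
  have hderiv : ∀ (C : ℝ) (t : ℝ), t ≠ 0 →
      HasDerivAt (fun t => g t - C * t ^ r) (deriv g t - C * (r * t ^ (r - 1))) t := by
    intro C t ht
    exact ((hg t).hasDerivAt).sub ((Real.hasDerivAt_rpow_const (Or.inl ht)).const_mul C)
  have hbound : ∀ t, T < t → deriv g t / t ^ (r - 1) - r * c < ε / 4 * r ∧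
      -(ε / 4 * r) < deriv g t / t ^ (r - 1) - r * c := by
    intro t ht
    have := hT₀ t (le_of_lt (lt_of_le_of_lt (le_max_left T₀ 1) ht))
    rw [Real.dist_eq] at this
    exact ⟨(abs_lt.1 this).2, (abs_lt.1 this).1⟩
  -- upper comparison
  have hanti : AntitoneOn (fun t => g t - (c + ε / 4) * t ^ r) (Set.Ici T) := by
    apply antitoneOn_of_deriv_nonpos (convex_Ici T)
    · exact (hg.continuous.sub (continuous_const.mul hcont)).continuousOn
    · rw [interior_Ici]
      intro t ht
      have htpos : (0:ℝ) < t := lt_trans hTpos ht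
      exact ((hderiv _ t htpos.ne').differentiableAt).differentiableWithinAt
    · rw [interior_Ici]
      intro t ht
      have htpos : (0:ℝ) < t := lt_trans hTpos ht
      rw [(hderiv (c + ε / 4) t htpos.ne').deriv]
      have hpow : (0:ℝ) < t ^ (r - 1) := Real.rpow_pos_of_pos htpos _
      have h1 := (hbound t ht).1
      rw [sub_lt_iff_lt_add, div_lt_iff₀ hpow] at h1
      nlinarith
  -- lower comparison
  have hmono : MonotoneOn (fun t => g t - (c - ε / 4) * t ^ r) (Set.Ici T) := by
    apply monotoneOn_of_deriv_nonneg (convex_Ici T)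
    · exact (hg.continuous.sub (continuous_const.mul hcont)).continuousOn
    · rw [interior_Ici]
      intro t ht
      have htpos : (0:ℝ) < t := lt_trans hTpos ht
      exact ((hderiv _ t htpos.ne').differentiableAt).differentiableWithinAt
    · rw [interior_Ici]
      intro t ht
      have htpos : (0:ℝ) < t := lt_trans hTpos ht
      rw [(hderiv (c - ε / 4) t htpos.ne').deriv]
      have hpow : (0:ℝ) < t ^ (r - 1) := Real.rpow_pos_of_pos htpos _
      have h1 := (hbound t ht).2
      rw [neg_lt, neg_sub, sub_lt_iff_lt_add] at h1
      have h2 : (r * c - ε / 4 * r) * t ^ (r - 1) < deriv g t := by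
        rw [← lt_div_iff₀ hpow]; linarith
      nlinarith
  -- pass to the limit
  have hlim : ∀ K : ℝ, Tendsto (fun x : ℝ => K / x ^ r) atTop (𝓝 0) :=
    fun K => Tendsto.div_atTop tendsto_const_nhds (tendsto_rpow_atTop hr0)
  have h1 := Metric.tendsto_nhds.1 (hlim (g T - (c + ε / 4) * T ^ r)) (ε / 4) (by positivity)
  have h2 := Metric.tendsto_nhds.1 (hlim (g T - (c - ε / 4) * T ^ r)) (ε / 4) (by positivity)
  filter_upwards [eventually_ge_atTop T, h1, h2] with x hx h1 h2
  have hxpos : (0:ℝ) < x := lt_of_lt_of_le hTpos hx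
  have hxr : (0:ℝ) < x ^ r := Real.rpow_pos_of_pos hxpos r
  rw [Real.dist_eq, sub_zero] at h1 h2
  rw [Real.dist_eq, abs_lt]
  have hu := hanti (Set.self_mem_Ici) hx hx
  have hl := hmono (Set.self_mem_Ici) hx hx
  simp only at hu hl
  constructor
  · have key : (g T - (c - ε / 4) * T ^ r) / x ^ r ≤ (g x - (c - ε / 4) * x ^ r) / x ^ r := by
      gcongr
    have e : (g x - (c - ε / 4) * x ^ r) / x ^ r = g x / x ^ r - (c - ε / 4) := by
      field_simp
    have habs := (abs_lt.1 h2).1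
    rw [e] at key
    linarith
  · have key : (g x - (c + ε / 4) * x ^ r) / x ^ r ≤ (g T - (c + ε / 4) * T ^ r) / x ^ r := by
      gcongr
    have e : (g x - (c + ε / 4) * x ^ r) / x ^ r = g x / x ^ r - (c + ε / 4) := by
      field_simp
    have habs := (abs_lt.1 h1).2
    rw [e] at key
    linarith

theorem balance_condition_critical_case
    (r₁ r₂ : ℝ) (hr₂ : 2 < r₂) (hr₁ : r₁ = 2 * (r₂ - 1))
    (a b : ℝ) (ha : 0 < a) (hb : 0 < b)
    (c_f c_g : ℝ) (hcf : c_f ≠ 0) (hcg : c_g ≠ 0)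
    (f g : ℝ → ℝ) (hg : Differentiable ℝ g)
    (hf_lim : Tendsto (fun s => f s * s / |s| ^ r₁) (cocompact ℝ) (𝓝 c_f))
    (hg_lim : Tendsto (fun s => deriv g s / |s| ^ (r₂ - 2)) (cocompact ℝ)
      (𝓝 ((r₂ - 1) * c_g)))
    (hbal : c_f > b * r₂ ^ 2 * c_g ^ 2) :
    Tendsto
      (fun s => (f s * s + a * g s * s - b * (deriv g s * s + g s) ^ 2) / |s| ^ r₁)
      (cocompact ℝ) (𝓝 (c_f - b * r₂ ^ 2 * c_g ^ 2)) ∧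
    0 < Filter.liminf
      (fun s => (f s * s + a * g s * s - b * (deriv g s * s + g s) ^ 2) / |s| ^ r₁)
      (cocompact ℝ) := by
  have hr : 1 < r₂ - 1 := by linarith
  have hee : r₂ - 1 - 1 = r₂ - 2 := by ring
  have hne : ∀ᶠ s : ℝ in cocompact ℝ, s ≠ 0 := by
    simpa using (isCompact_singleton (x := (0:ℝ))).compl_mem_cocompact
  -- asymptotics of g
  have hq : Tendsto (fun s => g s / (|s| ^ (r₂ - 2) * s)) (cocompact ℝ) (𝓝 c_g) := by
    rw [cocompact_eq_atBot_atTop, tendsto_sup]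
    have hg_lim' := hg_lim
    rw [cocompact_eq_atBot_atTop, tendsto_sup] at hg_lim'
    constructor
    · -- atBot via reflection
      set G : ℝ → ℝ := fun u => -g (-u) with hGdef
      have hGdiff : Differentiable ℝ G := (hg.comp differentiable_neg).neg
      have hGderiv : ∀ u, deriv G u = deriv g (-u) := by
        intro u
        have h1 : HasDerivAt (fun u : ℝ => -g (-u)) (deriv g (-u)) u := by
          exact (((hg (-u)).hasDerivAt).comp u (hasDerivAt_neg u)).neg.congr_deriv (by ring)
        rw [hGdef]
        exact h1.deriv
      have hhyp : Tendsto (fun u => deriv G u / u ^ (r₂ - 1 - 1)) atTop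
          (𝓝 ((r₂ - 1) * c_g)) := by
        have := (hg_lim'.1).comp (tendsto_neg_atTop_atBot (G := ℝ))
        apply this.congr'
        filter_upwards [eventually_gt_atTop 0] with u hu
        simp only [Function.comp_apply]
        rw [hGderiv, abs_neg, abs_of_pos hu, hee]
      have hG := aux_tendsto_atTop (r₂ - 1) c_g hr G hGdiff hhyp
      have hcomp : Tendsto ((fun s => g s / (|s| ^ (r₂ - 2) * s)) ∘ (fun u : ℝ => -u))
          atTop (𝓝 c_g) := by
        apply hG.congr'
        filter_upwards [eventually_gt_atTop 0] with u hu
        simp only [Function.comp_apply, hGdef]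
        rw [abs_neg, abs_of_pos hu]
        have h2 : u ^ (r₂ - 2) * u = u ^ (r₂ - 1) := by
          rw [← Real.rpow_add_one hu.ne', show r₂ - 2 + 1 = r₂ - 1 by ring]
        rw [mul_neg, div_neg, h2, neg_div]
      rw [← map_neg_atTop, tendsto_map'_iff]
      exact hcomp
    · -- atTop
      have hhyp : Tendsto (fun s => deriv g s / s ^ (r₂ - 1 - 1)) atTop
          (𝓝 ((r₂ - 1) * c_g)) := by
        apply (hg_lim'.2).congr'
        filter_upwards [eventually_gt_atTop 0] with s hs
        rw [abs_of_pos hs, hee]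
      have := aux_tendsto_atTop (r₂ - 1) c_g hr g hg hhyp
      apply this.congr'
      filter_upwards [eventually_gt_atTop 0] with s hs
      have h2 : s ^ (r₂ - 2) * s = s ^ (r₂ - 1) := by
        rw [← Real.rpow_add_one hs.ne', show r₂ - 2 + 1 = r₂ - 1 by ring]
      rw [abs_of_pos hs, h2]
  -- |s|^(2-r₂) → 0
  have habs : Tendsto (fun s : ℝ => |s|) (cocompact ℝ) atTop := by
    exact tendsto_norm_cocompact_atTop (E := ℝ)
  have hsmall : Tendsto (fun s : ℝ => |s| ^ (2 - r₂)) (cocompact ℝ) (𝓝 0) := by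
    have h1 : Tendsto (fun x : ℝ => x ^ (-(r₂ - 2))) atTop (𝓝 0) :=
      tendsto_rpow_neg_atTop (by linarith)
    have := h1.comp habs
    simpa [show -(r₂ - 2) = 2 - r₂ by ring, Function.comp_def] using this
  -- main limit
  have hmain : Tendsto
      (fun s => (f s * s + a * g s * s - b * (deriv g s * s + g s) ^ 2) / |s| ^ r₁)
      (cocompact ℝ) (𝓝 (c_f - b * r₂ ^ 2 * c_g ^ 2)) := by
    have hT : Tendsto (fun s => f s * s / |s| ^ r₁
        + a * (g s / (|s| ^ (r₂ - 2) * s)) * |s| ^ (2 - r₂)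
        - b * (deriv g s / |s| ^ (r₂ - 2) + g s / (|s| ^ (r₂ - 2) * s)) ^ 2)
        (cocompact ℝ)
        (𝓝 (c_f + a * c_g * 0 - b * ((r₂ - 1) * c_g + c_g) ^ 2)) :=
      (hf_lim.add (((tendsto_const_nhds.mul hq).mul hsmall))).sub
        (((hg_lim.add hq).pow 2).const_mul b)
    have heq : c_f + a * c_g * 0 - b * ((r₂ - 1) * c_g + c_g) ^ 2
        = c_f - b * r₂ ^ 2 * c_g ^ 2 := by ring
    rw [heq] at hT
    apply hT.congr'
    filter_upwards [hne] with s hs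
    have hA : (0:ℝ) < |s| ^ (r₂ - 2) := Real.rpow_pos_of_pos (abs_pos.2 hs) _
    have hpow : |s| ^ r₁ = (|s| ^ (r₂ - 2)) ^ 2 * s ^ 2 := by
      rw [hr₁, show (2 * (r₂ - 1)) = (r₂ - 2) * 2 + 2 by ring,
        Real.rpow_add (abs_pos.2 hs), Real.rpow_mul (abs_nonneg s), Real.rpow_two,
        Real.rpow_two, sq_abs]
    have h2r : |s| ^ (2 - r₂) = (|s| ^ (r₂ - 2))⁻¹ := by
      rw [show (2 - r₂) = -(r₂ - 2) by ring, Real.rpow_neg (abs_nonneg s)]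
    rw [hpow, h2r]
    field_simp
  refine ⟨hmain, ?_⟩
  rw [hmain.liminf_eq]
  linarith
end
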